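/- arXiv:1901.03825 — 4 statements merged into one kernel-verified Lean document; each statement's English description precedes it below -/
import Mathlib

section
/- Let B be a balanced convex compact subset of a Fréchet space E that contains a subset which is not projectively pluripolar in E, and let (P_n)_{n≥1} be a sequence of scalar-valued continuous homogeneous polynomials on E, where P_n has degree k_n ≤ n. If the set {z ∈ E_B : sup_{n≥1} (1/n)·log|P_n(z)| < ∞} has non-empty interior in E, then the family ((1/n)·log|P_n|)_{n≥1} is locally uniformly bounded from above on E. -/
open Set Filter Metric

/-- Extended-real logarithm: `-∞` for `t ≤ 0`. -/
noncomputable def elog (t : ℝ) : EReal := if t ≤ 0 then ⊥ else ((Real.log t : ℝ) : EReal)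

/-- An upper semicontinuous `u : ℂ → EReal` is subharmonic on `s` if it satisfies the
comparison principle with real parts of complex polynomials on closed discs in `s`. -/
def SubharmonicOn (u : ℂ → EReal) (s : Set ℂ) : Prop :=
  UpperSemicontinuousOn u s ∧
  ∀ (c : ℂ) (r : ℝ), 0 < r → Metric.closedBall c r ⊆ s →
    ∀ p : Polynomial ℂ,
      (∀ w ∈ Metric.sphere c r, u w ≤ (((p.eval w).re : ℝ) : EReal)) →
      ∀ w ∈ Metric.closedBall c r, u w ≤ (((p.eval w).re : ℝ) : EReal)

variable (E : Type*) [AddCommGroup E] [Module ℂ E] [TopologicalSpace E]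

/-- Plurisubharmonic on a domain `D` in a complex topological vector space. -/
def PlurisubharmonicOn (φ : E → EReal) (D : Set E) : Prop :=
  UpperSemicontinuousOn φ D ∧ (∀ z ∈ D, φ z ≠ ⊤) ∧
  ∀ a ∈ D, ∀ b : E, SubharmonicOn (fun w : ℂ => φ (a + w • b)) {w : ℂ | a + w • b ∈ D}

/-- Homogeneous plurisubharmonic: `φ(λ•z) = log |λ| + φ(z)`. -/
def HomogPSH (φ : E → EReal) : Prop :=
  PlurisubharmonicOn E φ Set.univ ∧
  ∀ (c : ℂ) (z : E), φ (c • z) = elog ‖c‖ + φ z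

/-- `A` is projectively pluripolar in `E`. -/
def ProjPluripolar (A : Set E) : Prop :=
  ∃ φ : E → EReal, HomogPSH E φ ∧ (∃ z, φ z ≠ ⊥) ∧ ∀ z ∈ A, φ z = ⊥

/-- `S` is pluripolar in the domain `D`. -/
def Pluripolar (D S : Set E) : Prop :=
  ∃ φ : E → EReal, PlurisubharmonicOn E φ D ∧ (∃ z ∈ D, φ z ≠ ⊥) ∧ ∀ z ∈ S, φ z = ⊥

variable (F : Type*) [AddCommGroup F] [Module ℂ F] [TopologicalSpace F]

/-- `P` is a continuous homogeneous polynomial of degree `k`. -/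
def IsContHomogPoly (k : ℕ) (P : E → F) : Prop :=
  ∃ M : ContinuousMultilinearMap ℂ (fun _ : Fin k => E) F, ∀ z, P z = M (fun _ => z)

section SpanDefs

variable {E : Type*} [AddCommGroup E] [Module ℝ E] [Module ℂ E] [IsScalarTower ℝ ℂ E]
  [TopologicalSpace E]

/-- Upper semicontinuity on the linear hull `E_B` of `B` with respect to the gauge-norm
`‖·‖_B = gauge B` topology of `E_B`. -/
def GaugeUSCOnSpan (B : Set E) (φ : E → EReal) : Prop :=
  ∀ z₀ ∈ (Submodule.span ℂ B : Set E), ∀ y : EReal, φ z₀ < y →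
    ∃ δ : ℝ, 0 < δ ∧ ∀ z ∈ (Submodule.span ℂ B : Set E), gauge B (z - z₀) < δ → φ z < y

/-- `φ` is homogeneous plurisubharmonic on the normed space `E_B`
(the linear hull of `B` with the Minkowski gauge norm of `B`). -/
def HomogPSHOnSpan (B : Set E) (φ : E → EReal) : Prop :=
  GaugeUSCOnSpan B φ ∧
  (∀ z ∈ (Submodule.span ℂ B : Set E), φ z ≠ ⊤) ∧
  (∀ a ∈ (Submodule.span ℂ B : Set E), ∀ b ∈ (Submodule.span ℂ B : Set E),
    SubharmonicOn (fun w : ℂ => φ (a + w • b)) Set.univ) ∧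
  ∀ (c : ℂ), ∀ z ∈ (Submodule.span ℂ B : Set E), φ (c • z) = elog ‖c‖ + φ z

/-- `A` is projectively pluripolar in the normed space `E_B`. -/
def ProjPluripolarInSpan (B A : Set E) : Prop :=
  ∃ φ : E → EReal, HomogPSHOnSpan B φ ∧
    (∃ z ∈ (Submodule.span ℂ B : Set E), φ z ≠ ⊥) ∧ ∀ z ∈ A, φ z = ⊥

end SpanDefs

section Aux

/-- Sum of the `e`-th powers of the `N`-th roots of unity vanishes for `1 ≤ e < N`. -/
lemma rootsum {N : ℕ} {ω : ℂ} (hprim : IsPrimitiveRoot ω N) {e : ℕ}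
    (h1 : 1 ≤ e) (h2 : e < N) :
    ∑ j ∈ Finset.range N, ω ^ (j * e) = 0 := by
  have hx1 : ω ^ e ≠ 1 := hprim.pow_ne_one_of_pos_of_lt (by omega) h2
  have hgeom := geom_sum_mul (ω ^ e) N
  have hxN : (ω ^ e) ^ N = 1 := by
    rw [← pow_mul, mul_comm, pow_mul, hprim.pow_eq_one, one_pow]
  rw [hxN, sub_self] at hgeom
  have hrw : ∑ j ∈ Finset.range N, ω ^ (j * e) = ∑ j ∈ Finset.range N, (ω ^ e) ^ j :=
    Finset.sum_congr rfl fun j _ => by rw [← pow_mul, mul_comm]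
  rw [hrw]
  exact (mul_eq_zero.mp hgeom).resolve_right (sub_ne_zero.mpr hx1)

/-- Discrete Fourier extraction of the top coefficient. -/
lemma fourier_top {k : ℕ} {ω : ℂ} (hprim : IsPrimitiveRoot ω (k + 1))
    (b : Finset (Fin k) → ℂ) :
    ((k : ℂ) + 1) * b Finset.univ =
      ∑ j ∈ Finset.range (k + 1), ω ^ j *
        ∑ s : Finset (Fin k), ω ^ (j * s.card) * b s := by
  classical
  have hstep : ∀ j, ω ^ j * ∑ s : Finset (Fin k), ω ^ (j * s.card) * b s
      = ∑ s : Finset (Fin k), ω ^ (j * (s.card + 1)) * b s := by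
    intro j
    rw [Finset.mul_sum]
    refine Finset.sum_congr rfl fun s _ => ?_
    rw [← mul_assoc, ← pow_add]
    congr 2
    ring
  calc ((k : ℂ) + 1) * b Finset.univ
      = ∑ s : Finset (Fin k),
          (∑ j ∈ Finset.range (k + 1), ω ^ (j * (s.card + 1))) * b s := by
        rw [Finset.sum_eq_single Finset.univ]
        · have : ∀ j ∈ Finset.range (k + 1), ω ^ (j * ((Finset.univ : Finset (Fin k)).card + 1)) = 1 := by
            intro j _
            rw [Finset.card_univ, Fintype.card_fin, mul_comm, pow_mul, hprim.pow_eq_one, one_pow]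
          rw [Finset.sum_congr rfl this, Finset.sum_const, Finset.card_range]
          push_cast
          simp
        · intro s _ hs
          have hcard : s.card < k := by
            have := Finset.card_lt_iff_ne_univ s
            simp only [Fintype.card_fin] at this
            exact this.mpr hs
          rw [rootsum hprim (Nat.le_add_left 1 s.card) (by omega), zero_mul]
        · intro h; exact absurd (Finset.mem_univ _) h
    _ = ∑ s : Finset (Fin k), ∑ j ∈ Finset.range (k + 1), ω ^ (j * (s.card + 1)) * b s := by
        refine Finset.sum_congr rfl fun s _ => ?_
        rw [Finset.sum_mul]
    _ = ∑ j ∈ Finset.range (k + 1), ∑ s : Finset (Fin k), ω ^ (j * (s.card + 1)) * b s :=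
        Finset.sum_comm
    _ = ∑ j ∈ Finset.range (k + 1), ω ^ j *
          ∑ s : Finset (Fin k), ω ^ (j * s.card) * b s := by
        refine Finset.sum_congr rfl fun j _ => (hstep j).symm

/-- Expansion of a multilinear map along `w + λ • u` on the diagonal. -/
lemma expand_poly {E : Type*} [AddCommGroup E] [Module ℂ E]
    {k : ℕ} (f : MultilinearMap ℂ (fun _ : Fin k => E) ℂ) (w u : E) (lam : ℂ) :
    f (fun _ => w + lam • u)
      = ∑ s : Finset (Fin k), lam ^ s.card * f (s.piecewise (fun _ => u) (fun _ => w)) := by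
  classical
  have h0 : (fun _ : Fin k => w + lam • u)
      = (fun _ : Fin k => lam • u) + (fun _ : Fin k => w) := by
    funext i; simp [add_comm]
  rw [h0, f.map_add_univ]
  refine Finset.sum_congr rfl fun s _ => ?_
  have h1 : (s.piecewise (fun _ : Fin k => lam • u) (fun _ : Fin k => w))
      = s.piecewise (fun i => lam • (s.piecewise (fun _ : Fin k => u) (fun _ : Fin k => w)) i)
          (s.piecewise (fun _ : Fin k => u) (fun _ : Fin k => w)) := by
    funext i
    by_cases h : i ∈ s <;> simp [Finset.piecewise, h]
  rw [h1, f.map_piecewise_smul]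
  simp [smul_eq_mul]

end Aux

/-- if the set where `sup_n (1/n) log |P_n|` is finite on `E_B` has nonempty
interior in `E`, the family `((1/n) log |P_n|)_n` is locally uniformly bounded from above
on `E`. -/
theorem statement3
    {E : Type*} [AddCommGroup E] [Module ℝ E] [Module ℂ E] [IsScalarTower ℝ ℂ E]
    [UniformSpace E] [IsUniformAddGroup E] [ContinuousSMul ℂ E] [LocallyConvexSpace ℝ E]
    [CompleteSpace E] [TopologicalSpace.MetrizableSpace E]
    (B : Set E) (hBcompact : IsCompact B) (hBbal : Balanced ℂ B) (hBconv : Convex ℝ B)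
    (hBbig : ∃ A : Set E, A ⊆ B ∧ ¬ ProjPluripolar E A)
    (P : ℕ → E → ℂ) (k : ℕ → ℕ)
    (hdeg : ∀ n, 1 ≤ n → k n ≤ n)
    (hP : ∀ n, 1 ≤ n → IsContHomogPoly E ℂ (k n) (P n))
    (hint : (interior {z ∈ (Submodule.span ℂ B : Set E) |
        ∃ C : ℝ, ∀ n, 1 ≤ n → ‖P n z‖ ≤ Real.exp (n * C)}).Nonempty) :
    ∀ z₀ : E, ∃ U ∈ nhds z₀, ∃ C : ℝ,
      ∀ z ∈ U, ∀ n, 1 ≤ n → ‖P n z‖ ≤ Real.exp (n * C) := by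
  classical
  -- continuity of each P n
  have hcont : ∀ n, 1 ≤ n → Continuous (P n) := by
    intro n hn
    obtain ⟨M, hM⟩ := (hP n hn : ∃ M : ContinuousMultilinearMap ℂ (fun _ : Fin (k n) => E) ℂ, ∀ z, P n z = M (fun _ => z))
    have : P n = fun z => M (fun _ => z) := funext hM
    rw [this]
    exact M.cont.comp (continuous_pi fun _ => continuous_id)
  -- Baire
  haveI : (uniformity E).IsCountablyGenerated := by
    rw [uniformity_eq_comap_nhds_zero E]
    exact Filter.comap.isCountablyGenerated _ _
  -- covering closed sets
  set T : ℕ → Set E := fun m => {z | ∀ n, 1 ≤ n → ‖P n z‖ ≤ Real.exp (n * m)}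
    with hT
  have hTclosed : ∀ m, IsClosed (T m) := by
    intro m
    have : T m = ⋂ n, ⋂ (_ : 1 ≤ n), {z | ‖P n z‖ ≤ Real.exp (n * m)} := by
      ext z; simp [hT]
    rw [this]
    exact isClosed_iInter fun n => isClosed_iInter fun hn =>
      isClosed_le (continuous_norm.comp (hcont n hn)) continuous_const
  have key : ∃ m : ℕ, (interior (T m)).Nonempty := by
    by_contra h
    push_neg at h
    have hdense : Dense (⋂ m, (T m)ᶜ) :=
      dense_iInter_of_isOpen (fun m => (hTclosed m).isOpen_compl)
        (fun m => interior_eq_empty_iff_dense_compl.mp (h m))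
    obtain ⟨y, hyo, hyd⟩ := hdense.inter_open_nonempty _ isOpen_interior hint
    obtain ⟨-, C, hC⟩ := interior_subset hyo
    obtain ⟨m, hm⟩ := exists_nat_ge C
    have : y ∈ T m := by
      intro n hn
      refine (hC n hn).trans (Real.exp_le_exp.mpr ?_)
      have : (0:ℝ) ≤ (n:ℝ) := Nat.cast_nonneg n
      exact mul_le_mul_of_nonneg_left hm this
    exact (Set.mem_iInter.mp hyd m) this
  obtain ⟨m, w₀, hw₀⟩ := key
  -- balanced neighborhood U of 0 with w₀ + U ⊆ T m
  have hpre : (fun u : E => w₀ + u) ⁻¹' interior (T m) ∈ nhds (0 : E) := by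
    refine ContinuousAt.preimage_mem_nhds (by fun_prop) ?_
    rw [add_zero]
    exact isOpen_interior.mem_nhds hw₀
  obtain ⟨U, ⟨hU0, hUbal⟩, hUsub⟩ := (nhds_basis_balanced ℂ E).mem_iff.mp hpre
  -- uniform bound on U via discrete Fourier / maximum principle
  have hUbound : ∀ u ∈ U, ∀ n, 1 ≤ n → ‖P n u‖ ≤ Real.exp (n * m) := by
    intro u hu n hn
    obtain ⟨M, hM⟩ := (hP n hn : ∃ M : ContinuousMultilinearMap ℂ (fun _ : Fin (k n) => E) ℂ, ∀ z, P n z = M (fun _ => z))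
    set ω := Complex.exp (2 * Real.pi * Complex.I / (k n + 1)) with hω
    have hprim : IsPrimitiveRoot ω (k n + 1) := by
      have := Complex.isPrimitiveRoot_exp (k n + 1) (Nat.succ_ne_zero (k n))
      rw [hω]; push_cast at this ⊢; exact this
    have hωabs : ∀ j : ℕ, ‖ω ^ j‖ = 1 := by
      intro j
      have h1 : ‖ω‖ = 1 := by
        have : (2 * (Real.pi : ℂ) * Complex.I / ((k n : ℂ) + 1))
            = ((2 * Real.pi / (k n + 1) : ℝ) : ℂ) * Complex.I := by
          push_cast; ring
        rw [hω, this, Complex.norm_exp_ofReal_mul_I]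
      rw [norm_pow, h1, one_pow]
    -- the key identity
    have hexp : ∀ lam : ℂ, P n (w₀ + lam • u)
        = ∑ s : Finset (Fin (k n)), lam ^ s.card *
            M.toMultilinearMap (s.piecewise (fun _ => u) (fun _ => w₀)) := by
      intro lam
      rw [hM]
      exact expand_poly M.toMultilinearMap w₀ u lam
    have htop : P n u
        = M.toMultilinearMap ((Finset.univ : Finset (Fin (k n))).piecewise (fun _ => u) (fun _ => w₀)) := by
      rw [hM, Finset.piecewise_univ]
      rfl
    have hone := fourier_top hprim
      (fun s => M.toMultilinearMap (s.piecewise (fun _ => u) (fun _ => w₀)))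
    have hone2 : ((k n : ℂ) + 1) * P n u
        = ∑ j ∈ Finset.range (k n + 1), ω ^ j * P n (w₀ + ω ^ j • u) := by
      rw [htop, hone]
      refine Finset.sum_congr rfl fun j _ => ?_
      rw [hexp (ω ^ j)]
      congr 1
      refine Finset.sum_congr rfl fun s _ => ?_
      rw [pow_mul]
    -- take absolute values
    have hterm : ∀ j ∈ Finset.range (k n + 1),
        ‖ω ^ j * P n (w₀ + ω ^ j • u)‖ ≤ Real.exp (n * m) := by
      intro j _
      rw [norm_mul, hωabs j, one_mul]
      have hmem : w₀ + ω ^ j • u ∈ T m := by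
        have : ω ^ j • u ∈ U := hUbal.smul_mem (by rw [hωabs j]) hu
        exact interior_subset (hUsub this)
      exact hmem n hn
    have habs : ((k n : ℝ) + 1) * ‖P n u‖ ≤ ((k n : ℝ) + 1) * Real.exp (n * m) := by
      have h1 : ‖((k n : ℂ) + 1) * P n u‖ = ((k n : ℝ) + 1) * ‖P n u‖ := by
        rw [norm_mul]
        congr 1
        rw [show ((k n : ℂ) + 1) = ((k n + 1 : ℕ) : ℂ) by push_cast; ring, RCLike.norm_natCast]
        push_cast; ring
      calc ((k n : ℝ) + 1) * ‖P n u‖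
          = ‖((k n : ℂ) + 1) * P n u‖ := h1.symm
        _ = ‖∑ j ∈ Finset.range (k n + 1), ω ^ j * P n (w₀ + ω ^ j • u)‖ := by
            rw [hone2]
        _ ≤ ∑ j ∈ Finset.range (k n + 1), ‖ω ^ j * P n (w₀ + ω ^ j • u)‖ :=
            norm_sum_le _ _
        _ ≤ ∑ j ∈ Finset.range (k n + 1), Real.exp (n * m) := Finset.sum_le_sum hterm
        _ = ((k n : ℝ) + 1) * Real.exp (n * m) := by
            rw [Finset.sum_const, Finset.card_range]; push_cast; ring
    have hKpos : (0:ℝ) < (k n : ℝ) + 1 := by positivity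
    exact le_of_mul_le_mul_left habs hKpos
  -- homogeneity
  have hhom : ∀ n, 1 ≤ n → ∀ (c : ℂ) (z : E), P n (c • z) = c ^ (k n) * P n z := by
    intro n hn c z
    obtain ⟨M, hM⟩ := (hP n hn : ∃ M : ContinuousMultilinearMap ℂ (fun _ : Fin (k n) => E) ℂ, ∀ z, P n z = M (fun _ => z))
    rw [hM, hM]
    have h := M.toMultilinearMap.map_smul_univ (fun _ : Fin (k n) => c) (fun _ : Fin (k n) => z)
    simp only [ContinuousMultilinearMap.coe_coe, Finset.prod_const, Finset.card_univ,
      Fintype.card_fin, smul_eq_mul] at h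
    exact h
  -- conclusion at an arbitrary point
  intro z₀
  obtain ⟨U₁, hU₁0, hU₁half⟩ := exists_nhds_zero_half hU0
  obtain ⟨U₂, ⟨hU₂0, hU₂bal⟩, hU₂sub⟩ := (nhds_basis_balanced ℂ E).mem_iff.mp hU₁0
  have habs : Absorbent ℂ U₂ := absorbent_nhds_zero hU₂0
  obtain ⟨c, hcz, hcnorm⟩ :=
    ((habs z₀).and (eventually_cobounded_le_norm (1:ℝ))).exists
  have hc0 : c ≠ 0 := by
    intro h; rw [h, norm_zero] at hcnorm; linarith
  obtain ⟨u₂, hu₂, hz₀eq⟩ := Set.mem_smul_set.mp (Set.singleton_subset_iff.mp hcz)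
  -- neighborhood of z₀
  set V : Set E := (fun z => c⁻¹ • (z - z₀)) ⁻¹' U₂ with hV
  have hVmem : V ∈ nhds z₀ := by
    refine ContinuousAt.preimage_mem_nhds (by fun_prop) ?_
    rw [sub_self, smul_zero]
    exact hU₂0
  refine ⟨V, hVmem, m + Real.log ‖c‖, ?_⟩
  intro z hz n hn
  have hzw : z = c • (u₂ + c⁻¹ • (z - z₀)) := by
    rw [smul_add, smul_inv_smul₀ hc0, hz₀eq]
    abel
  have hwU : u₂ + c⁻¹ • (z - z₀) ∈ U := hU₁half _ (hU₂sub hu₂) _ (hU₂sub hz)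
  have hbound := hUbound _ hwU n hn
  rw [hzw, hhom n hn c (u₂ + c⁻¹ • (z - z₀)), norm_mul, norm_pow]
  have h1 : ‖c‖ ^ k n ≤ ‖c‖ ^ n := by
    refine pow_le_pow_right₀ ?_ (hdeg n hn)
    exact hcnorm
  have h2 : ‖c‖ ^ k n * ‖P n (u₂ + c⁻¹ • (z - z₀))‖
      ≤ ‖c‖ ^ n * Real.exp (n * m) := by
    refine mul_le_mul h1 hbound (norm_nonneg _) (by positivity)
  refine h2.trans ?_
  have hcabs : ‖c‖ = ‖c‖ := rfl
  rw [hcabs]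
  have hcpos : (0:ℝ) < ‖c‖ := by linarith
  have heq : Real.exp (↑n * ((m : ℝ) + Real.log ‖c‖)) = ‖c‖ ^ n * Real.exp (↑n * (m : ℝ)) := by
    have h3 : Real.exp (↑n * Real.log ‖c‖) = ‖c‖ ^ n := by
      rw [Real.exp_nat_mul, Real.exp_log hcpos]
    rw [mul_add, Real.exp_add, h3]; ring
  rw [heq]
end

section
/- Let D be a domain (nonempty open connected set) in a Fréchet space E, let F be a barrelled locally convex space, let f : D → F be holomorphic, and let G be a closed linear subspace of F. If the set D₀ = {z ∈ D : f(z) ∈ G} is not rare in D (i.e. the closure of D₀ has nonempty interior in D), then f(z) ∈ G for all z ∈ D. -/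
open Set Filter

/-- Holomorphy for maps between complex topological vector spaces: continuity together
with holomorphy of all scalarizations along complex lines, near each point of `D`. -/
def HolomorphicOn' {X G : Type*} [AddCommGroup X] [Module ℂ X] [TopologicalSpace X]
    [AddCommGroup G] [Module ℂ G] [TopologicalSpace G]
    (f : X → G) (D : Set X) : Prop :=
  ContinuousOn f D ∧
  ∀ a ∈ D, ∀ b : X, ∀ φ : G →L[ℂ] ℂ,
    ∃ U ∈ nhds (0 : ℂ), U ⊆ {t : ℂ | a + t • b ∈ D} ∧
      DifferentiableOn ℂ (fun t : ℂ => φ (f (a + t • b))) U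

/-- Separation of a point from a closed complex subspace by a continuous `ℂ`-linear
functional vanishing on the subspace. -/
theorem exists_functional_vanishing {F : Type*} [AddCommGroup F] [Module ℝ F] [Module ℂ F]
    [IsScalarTower ℝ ℂ F] [TopologicalSpace F] [IsTopologicalAddGroup F] [ContinuousSMul ℂ F]
    [LocallyConvexSpace ℝ F] (G : Submodule ℂ F) (hG : IsClosed (G : Set F))
    (x : F) (hx : x ∉ G) : ∃ ψ : F →L[ℂ] ℂ, (∀ g ∈ G, ψ g = 0) ∧ ψ x ≠ 0 := by
  have hconv : Convex ℝ (G : Set F) := by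
    have := (G.restrictScalars ℝ).convex
    simpa using this
  obtain ⟨ψ, u, hu, hux⟩ := RCLike.geometric_hahn_banach_closed_point (𝕜 := ℂ) hconv hG hx
  have hu0 : (0:ℝ) < u := by simpa using hu 0 G.zero_mem
  refine ⟨ψ, ?_, ?_⟩
  · intro g hg
    by_contra h0
    have hmem : (((u+1 : ℝ) : ℂ) * (ψ g)⁻¹) • g ∈ G := G.smul_mem _ hg
    have h2 := hu _ hmem
    rw [map_smul, smul_eq_mul, mul_assoc, inv_mul_cancel₀ h0, mul_one] at h2
    simp at h2
    linarith
  · intro h0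
    rw [h0] at hux
    simp at hux
    linarith

/-- identity-type theorem.  If a holomorphic map from a domain `D` in a
Fréchet space into a barrelled locally convex space takes values in a closed subspace `G`
on a non-rare subset of `D`, then it takes values in `G` everywhere on `D`. -/
theorem statement10
    {E : Type*} [AddCommGroup E] [Module ℝ E] [Module ℂ E] [IsScalarTower ℝ ℂ E]
    [UniformSpace E] [IsUniformAddGroup E] [ContinuousSMul ℂ E] [LocallyConvexSpace ℝ E]
    [CompleteSpace E] [TopologicalSpace.MetrizableSpace E]
    {F : Type*} [AddCommGroup F] [Module ℝ F] [Module ℂ F] [IsScalarTower ℝ ℂ F]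
    [TopologicalSpace F] [IsTopologicalAddGroup F] [ContinuousSMul ℂ F]
    [LocallyConvexSpace ℝ F]
    -- `F` is barrelled: every barrel is a neighbourhood of `0`
    (hbarrelled : ∀ S : Set F, IsClosed S → Convex ℝ S → Balanced ℂ S →
      Absorbent ℂ S → S ∈ nhds (0 : F))
    (D : Set E) (hDopen : IsOpen D) (hDne : D.Nonempty) (hDconn : IsPreconnected D)
    (f : E → F) (hf : HolomorphicOn' f D)
    (G : Submodule ℂ F) (hG : IsClosed (G : Set F))
    (hnotrare : (interior (closure {z ∈ D | f z ∈ G}) ∩ D).Nonempty) :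
    ∀ z ∈ D, f z ∈ G := by
  haveI : ContinuousSMul ℝ E := IsScalarTower.continuousSMul (M := ℝ) (α := E) ℂ
  obtain ⟨hcont, hdiff⟩ := hf
  set S : Set E := {z ∈ D | f z ∈ G} with hS
  set A : Set E := interior S with hA
  have hSsubD : S ⊆ D := fun z hz => hz.1
  -- relative closedness of S in D
  have hclosure : interior (closure S) ∩ D ⊆ S := by
    rintro y ⟨hyc, hyD⟩
    have hyc' : y ∈ closure S := interior_subset hyc
    have h1 : f y ∈ closure (f '' S) :=
      ((hcont y hyD).mono hSsubD).mem_closure_image hyc'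
    have h2 : closure (f '' S) ⊆ (G : Set F) := by
      rw [← hG.closure_eq]
      exact closure_mono (by rintro _ ⟨w, hw, rfl⟩; exact hw.2)
    exact ⟨hyD, h2 h1⟩
  -- A is nonempty (meets D)
  have hAne : (D ∩ A).Nonempty := by
    obtain ⟨x, hx⟩ := hnotrare
    refine ⟨x, hx.2, ?_⟩
    exact interior_maximal hclosure (isOpen_interior.inter hDopen) hx
  have hAsubD : A ⊆ D := interior_subset.trans hSsubD
  -- the key local-to-global step
  have key : ∀ z ∈ D, z ∈ closure A → z ∈ A := by
    intro z hzD hzA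
    obtain ⟨s, ⟨hs_nhds, hs_conv⟩, hsD⟩ :=
      ((LocallyConvexSpace.convex_basis (𝕜 := ℝ) z).mem_iff).mp (hDopen.mem_nhds hzD)
    set V : Set E := interior s with hV
    have hVz : z ∈ V := mem_interior_iff_mem_nhds.mpr hs_nhds
    have hVconv : Convex ℝ V := hs_conv.interior
    have hVD : V ⊆ D := interior_subset.trans hsD
    obtain ⟨a, haA, haV⟩ : ∃ a, a ∈ A ∧ a ∈ V := by
      have := mem_closure_iff_nhds.mp hzA V (isOpen_interior.mem_nhds hVz)
      obtain ⟨a, haV, haA⟩ := this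
      exact ⟨a, haA, haV⟩
    have hVS : ∀ w ∈ V, f w ∈ G := by
      intro w hwV
      by_contra hfw
      obtain ⟨ψ, hψG, hψw⟩ := exists_functional_vanishing G hG _ hfw
      set b : E := w - a with hb
      set h : ℂ → ℂ := fun t => ψ (f (a + t • b)) with hh
      set Ω : Set ℂ := {t : ℂ | a + t • b ∈ D} with hΩ
      have hcont_line : Continuous fun t : ℂ => a + t • b :=
        continuous_const.add (continuous_id.smul continuous_const)
      have hΩopen : IsOpen Ω := hDopen.preimage hcont_line
      -- h is analytic on Ω
      have hholo : AnalyticOnNhd ℂ h Ω := by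
        apply DifferentiableOn.analyticOnNhd ?_ hΩopen
        intro t ht
        obtain ⟨U, hU0, hUsub, hUdiff⟩ := hdiff (a + t • b) ht b ψ
        have hg : DifferentiableAt ℂ (fun s : ℂ => ψ (f (a + t • b + s • b))) 0 :=
          hUdiff.differentiableAt hU0
        have heq : h = fun x : ℂ => ψ (f (a + t • b + (x - t) • b)) := by
          funext x
          show ψ (f (a + x • b)) = _
          have hx : a + x • b = a + t • b + (x - t) • b := by
            rw [sub_smul]; abel
          rw [hx]
        have hg0 : DifferentiableAt ℂ (fun s : ℂ => ψ (f (a + t • b + s • b)))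
            ((fun x : ℂ => x - t) t) := by simpa using hg
        have hsub : DifferentiableAt ℂ (fun x : ℂ => x - t) t :=
          differentiableAt_id.sub_const t
        have hcomp : DifferentiableAt ℂ
            ((fun s : ℂ => ψ (f (a + t • b + s • b))) ∘ (fun x : ℂ => x - t)) t :=
          DifferentiableAt.comp t hg0 hsub
        rw [heq]
        exact hcomp.differentiableWithinAt
      -- h vanishes near 0
      have hzero : h =ᶠ[nhds 0] 0 := by
        have hmemA : {t : ℂ | a + t • b ∈ A} ∈ nhds (0 : ℂ) := by
          apply (isOpen_interior.preimage hcont_line).mem_nhds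
          simpa using haA
        filter_upwards [hmemA] with t ht
        exact hψG _ (interior_subset ht).2
      -- the real segment [0,1] lies in Ω
      have hseg : segment ℝ (0:ℂ) 1 ⊆ Ω := by
        rintro t ⟨p, q, hp, hq, hpq, rfl⟩
        show a + (p • (0:ℂ) + q • (1:ℂ)) • b ∈ D
        have h1 : (p • (0:ℂ) + q • (1:ℂ)) = ((q : ℝ) : ℂ) := by
          simp [Complex.real_smul]
        rw [h1]
        have h2 : a + ((q : ℝ) : ℂ) • b = p • a + q • w := by
          have : ((q : ℝ) : ℂ) • b = q • b := by
            rw [← smul_one_smul ℂ q b]; norm_num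
          rw [this, hb, smul_sub]
          have hp1 : p = 1 - q := by linarith
          rw [hp1, sub_smul, one_smul]
          abel
        rw [h2]
        exact hVD (hVconv haV hwV hp hq hpq)
      have h0Ω : (0:ℂ) ∈ Ω := by
        show a + (0:ℂ) • b ∈ D
        simpa using hVD haV
      set C := connectedComponentIn Ω 0 with hC
      have hCconn : IsPreconnected C := isPreconnected_connectedComponentIn
      have h0C : (0:ℂ) ∈ C := mem_connectedComponentIn h0Ω
      have h1C : (1:ℂ) ∈ C :=
        (convex_segment (0:ℂ) 1).isPreconnected.subset_connectedComponentIn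
          (left_mem_segment ℝ (0:ℂ) 1) hseg (right_mem_segment ℝ (0:ℂ) 1)
      have hEq : EqOn h 0 C :=
        (hholo.mono (connectedComponentIn_subset Ω 0)).eqOn_zero_of_preconnected_of_eventuallyEq_zero
          hCconn h0C hzero
      have h1 : ψ (f (a + (1:ℂ) • b)) = 0 := hEq h1C
      have hw : a + (1:ℂ) • b = w := by rw [one_smul, hb]; abel
      rw [hw] at h1
      exact hψw h1
    -- V ⊆ S hence z ∈ A
    have hVsubS : V ⊆ S := fun w hw => ⟨hVD hw, hVS w hw⟩
    exact interior_maximal hVsubS isOpen_interior hVz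
  -- clopen argument
  intro z hzD
  have hcover : D ⊆ A ∪ (D \ closure A) := by
    intro y hy
    by_cases hyc : y ∈ closure A
    · exact Or.inl (key y hy hyc)
    · exact Or.inr ⟨hy, hyc⟩
  have hzc : z ∈ closure A := by
    by_contra hzc
    obtain ⟨y, hyD, hyA, hyV⟩ := hDconn A (D \ closure A) isOpen_interior
      (hDopen.sdiff isClosed_closure) hcover
      (hAne.imp fun x hx => ⟨hx.1, hx.2⟩) ⟨z, hzD, hzD, hzc⟩
    exact hyV.2 (subset_closure hyA)
  exact (interior_subset (key z hzD hzc)).2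
end

section
/- Let E be a Fréchet space and let B be a compact balanced convex subset of E that is not pluripolar in E. Then the boundary ∂B of B is not projectively pluripolar in E. -/
open Set Filter Metric

variable (E : Type*) [AddCommGroup E] [Module ℂ E] [TopologicalSpace E]

variable (F : Type*) [AddCommGroup F] [Module ℂ F] [TopologicalSpace F]

theorem frontier_ray_aux
    {E : Type*} [AddCommGroup E] [Module ℝ E] [Module ℂ E] [IsScalarTower ℝ ℂ E]
    [UniformSpace E] [IsUniformAddGroup E] [ContinuousSMul ℂ E] [LocallyConvexSpace ℝ E]
    [CompleteSpace E] [TopologicalSpace.MetrizableSpace E]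
    (B : Set E) (hBcompact : IsCompact B)
    (z : E) (hz : z ∈ B) (hz0 : z ≠ 0) :
    ∃ t : ℝ, 0 < t ∧ ((t : ℂ)) • z ∈ frontier B := by
  have hBclosed : IsClosed B := hBcompact.isClosed
  set S : Set ℝ := {t : ℝ | 0 ≤ t ∧ ((t : ℂ)) • z ∈ B} with hSdef
  have hSne : S.Nonempty := ⟨1, zero_le_one, by simpa using hz⟩
  have hcont : Continuous fun t : ℝ => ((t : ℂ)) • z :=
    Complex.continuous_ofReal.smul continuous_const
  have hScl : IsClosed S := isClosed_Ici.inter (hBclosed.preimage hcont)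
  have hSbdd : BddAbove S := by
    have hvb : Bornology.IsVonNBounded ℂ B := hBcompact.totallyBounded.isVonNBounded ℂ
    have habs : Absorbs ℂ ({z}ᶜ : Set E) B :=
      hvb (isOpen_compl_singleton.mem_nhds (by simpa using (Ne.symm hz0)))
    obtain ⟨r, hr⟩ := absorbs_iff_norm.1 habs
    refine ⟨max r 0, fun t ht => ?_⟩
    by_contra h
    push_neg at h
    have htpos : (0:ℝ) < t := lt_of_le_of_lt (le_max_right r 0) h
    have hrt : r ≤ ‖(t : ℂ)‖ := by
      rw [Complex.norm_real, Real.norm_eq_abs, abs_of_pos htpos]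
      exact le_trans (le_max_left r 0) h.le
    have := hr _ hrt ht.2
    rw [Set.mem_smul_set_iff_inv_smul_mem₀ (by exact_mod_cast htpos.ne')] at this
    rw [inv_smul_smul₀ (by exact_mod_cast htpos.ne' : (t:ℂ) ≠ 0)] at this
    exact this rfl
  set t₀ := sSup S with ht₀def
  have ht₀S : t₀ ∈ S := hScl.csSup_mem hSne hSbdd
  have ht₀pos : 0 < t₀ := lt_of_lt_of_le zero_lt_one (le_csSup hSbdd ⟨zero_le_one, by simpa using hz⟩)
  refine ⟨t₀, ht₀pos, ?_, ?_⟩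
  · exact subset_closure ht₀S.2
  · intro hint
    have : (fun t : ℝ => ((t : ℂ)) • z) ⁻¹' (interior B) ∈ nhds t₀ :=
      hcont.continuousAt.preimage_mem_nhds (isOpen_interior.mem_nhds hint)
    obtain ⟨ε, hε, hball⟩ := Metric.mem_nhds_iff.1 this
    have h1 : t₀ + ε/2 ∈ S := by
      constructor
      · linarith [ht₀S.1]
      · exact interior_subset (hball (by rw [Metric.mem_ball, Real.dist_eq]; rw [show t₀ + ε/2 - t₀ = ε/2 by ring, abs_of_pos (half_pos hε)]; exact half_lt_self hε))
    have := le_csSup hSbdd h1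
    linarith

/-- Example 2.2: if `B` is a compact balanced convex non-pluripolar subset
of a Fréchet space `E`, then the boundary `∂B` is not projectively pluripolar in `E`. -/
theorem statement14
    {E : Type*} [AddCommGroup E] [Module ℝ E] [Module ℂ E] [IsScalarTower ℝ ℂ E]
    [UniformSpace E] [IsUniformAddGroup E] [ContinuousSMul ℂ E] [LocallyConvexSpace ℝ E]
    [CompleteSpace E] [TopologicalSpace.MetrizableSpace E]
    (B : Set E) (hBcompact : IsCompact B) (hBbal : Balanced ℂ B) (hBconv : Convex ℝ B)
    (hBnotpolar : ¬ Pluripolar E Set.univ B) :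
    ¬ ProjPluripolar E (frontier B) := by
  rintro ⟨φ, ⟨hpsh, hhom⟩, ⟨z₀, hz₀⟩, hbd⟩
  apply hBnotpolar
  refine ⟨φ, hpsh, ⟨z₀, Set.mem_univ _, hz₀⟩, ?_⟩
  intro z hz
  rcases eq_or_ne z 0 with rfl | hz0
  · have h := hhom 0 0
    simp only [smul_zero] at h
    rw [h]
    simp [elog, EReal.bot_add]
  · obtain ⟨t, htpos, htf⟩ := frontier_ray_aux B hBcompact z hz hz0
    have h1 : φ ((t : ℂ) • z) = ⊥ := hbd _ htf
    rw [hhom] at h1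
    have h2 : elog ‖(t : ℂ)‖ = ((Real.log t : ℝ) : EReal) := by
      rw [Complex.norm_real, Real.norm_eq_abs, abs_of_pos htpos]
      simp [elog, not_le.2 htpos]
    rw [h2] at h1
    rcases EReal.add_eq_bot_iff.1 h1 with h | h
    · exact absurd h (EReal.coe_ne_bot _)
    · exact h
end

section
/- Let E be a Fréchet space and let B be a balanced convex compact subset of E containing a subset that is not projectively pluripolar in E. Then the linear span E_B of B is dense in E. -/
open Set Filter Metric

lemma elog_ne_top (t : ℝ) : elog t ≠ ⊤ := by
  unfold elog; split
  · exact bot_ne_top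
  · exact EReal.coe_ne_top _

lemma elog_lt_coe_iff {r t : ℝ} : elog t < (r : EReal) ↔ t < Real.exp r := by
  unfold elog; split_ifs with h
  · constructor
    · intro _; linarith [Real.exp_pos r]
    · intro _; exact bot_lt_iff_ne_bot.mpr (EReal.bot_ne_coe r).symm
  · push_neg at h
    rw [EReal.coe_lt_coe_iff]
    exact Real.log_lt_iff_lt_exp h

lemma elog_le_coe_iff {r t : ℝ} : elog t ≤ (r : EReal) ↔ t ≤ Real.exp r := by
  unfold elog; split_ifs with h
  · constructor
    · intro _; linarith [Real.exp_pos r]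
    · intro _; exact bot_le
  · push_neg at h
    rw [EReal.coe_le_coe_iff]
    exact Real.log_le_iff_le_exp h

lemma elog_mul {a b : ℝ} (ha : 0 ≤ a) (hb : 0 ≤ b) : elog (a * b) = elog a + elog b := by
  rcases eq_or_lt_of_le ha with h | h
  · simp only [← h, zero_mul]
    have : elog 0 = ⊥ := if_pos le_rfl
    rw [this, EReal.bot_add]
  · rcases eq_or_lt_of_le hb with h' | h'
    · simp only [← h', mul_zero]
      have : elog 0 = ⊥ := if_pos le_rfl
      rw [this, EReal.add_bot]
    · have hab : 0 < a * b := mul_pos h h'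
      unfold elog
      rw [if_neg (not_le.mpr hab), if_neg (not_le.mpr h), if_neg (not_le.mpr h'),
        Real.log_mul h.ne' h'.ne', EReal.coe_add]

lemma usc_elog_comp {X : Type*} [TopologicalSpace X] {h : X → ℝ} (hc : Continuous h) :
    UpperSemicontinuous (fun x => elog (h x)) := by
  intro x y hy
  induction y using EReal.rec with
  | bot => exact absurd hy (by simp)
  | coe r =>
    have hx : h x < Real.exp r := elog_lt_coe_iff.mp hy
    filter_upwards [(hc.tendsto x).eventually (eventually_lt_nhds hx)] with z hz
    exact elog_lt_coe_iff.mpr hz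
  | top =>
    filter_upwards with z
    exact lt_top_iff_ne_top.mpr (elog_ne_top _)

/-- Maximum modulus principle for an affine function against `exp` of a polynomial. -/
lemma maxmod (c₀ c₁ c : ℂ) {r : ℝ} (hr : 0 < r) (p : Polynomial ℂ)
    (h : ∀ w ∈ sphere c r, ‖c₀ + c₁ * w‖ ≤ Real.exp ((p.eval w).re)) :
    ∀ w ∈ closedBall c r, ‖c₀ + c₁ * w‖ ≤ Real.exp ((p.eval w).re) := by
  intro w hw
  set g : ℂ → ℂ := fun w => (c₀ + c₁ * w) * Complex.exp (-(p.eval w)) with hgdef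
  have hg : Differentiable ℂ g :=
    ((differentiable_const _).add ((differentiable_const _).mul differentiable_id)).mul
      (p.differentiable.neg.cexp)
  have hgnorm : ∀ z, ‖g z‖ = ‖c₀ + c₁ * z‖ * Real.exp (-(p.eval z).re) := by
    intro z
    simp [hgdef, Complex.norm_exp, map_mul]
  have key : ‖g w‖ ≤ 1 := by
    refine Complex.norm_le_of_forall_mem_frontier_norm_le (isBounded_ball (x := c) (r := r))
      hg.diffContOnCl ?_ ?_
    · intro z hz
      rw [frontier_ball c hr.ne'] at hz
      rw [hgnorm z]
      have h1 := h z hz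
      have h2 : (0:ℝ) < Real.exp (-(p.eval z).re) := Real.exp_pos _
      calc ‖c₀ + c₁ * z‖ * Real.exp (-(p.eval z).re)
          ≤ Real.exp ((p.eval z).re) * Real.exp (-(p.eval z).re) := by
            exact mul_le_mul_of_nonneg_right h1 h2.le
        _ = 1 := by rw [← Real.exp_add]; simp
    · rwa [closure_ball c hr.ne']
  rw [hgnorm w] at key
  have h2 : (0:ℝ) < Real.exp (-(p.eval w).re) := Real.exp_pos _
  have := mul_le_mul_of_nonneg_right key (Real.exp_pos ((p.eval w).re)).le
  rwa [one_mul, mul_assoc, ← Real.exp_add, neg_add_cancel, Real.exp_zero, mul_one] at this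

variable (E : Type*) [AddCommGroup E] [Module ℂ E] [TopologicalSpace E]

variable (F : Type*) [AddCommGroup F] [Module ℂ F] [TopologicalSpace F]

/-- `elog ∘ abs` of a continuous linear functional is homogeneous plurisubharmonic. -/
lemma homogPSH_of_clm {E : Type*} [AddCommGroup E] [Module ℂ E] [TopologicalSpace E]
    (f : E →L[ℂ] ℂ) : HomogPSH E (fun z => elog (‖f z‖)) := by
  constructor
  · refine ⟨(usc_elog_comp (continuous_norm.comp f.continuous)).upperSemicontinuousOn _,
      fun z _ => elog_ne_top _, ?_⟩
    intro a _ b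
    have hval : ∀ w : ℂ, f (a + w • b) = f a + f b * w := by
      intro w
      rw [map_add, map_smul, smul_eq_mul, mul_comm]
    have hfun : (fun w : ℂ => elog (‖f (a + w • b)‖))
        = fun w : ℂ => elog (‖f a + f b * w‖) := by
      funext w; rw [hval w]
    constructor
    · simp only [hfun]
      refine (usc_elog_comp ?_).upperSemicontinuousOn _
      exact continuous_norm.comp (continuous_const.add (continuous_const.mul continuous_id))
    · intro c r hr _ p hp w hw
      have hsphere : ∀ z ∈ sphere c r, ‖f a + f b * z‖ ≤ Real.exp ((p.eval z).re) := by
        intro z hz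
        have h1 := hp z hz
        simp only [hval] at h1
        exact elog_le_coe_iff.mp h1
      have h2 := maxmod (f a) (f b) c hr p hsphere w hw
      show elog (‖f (a + w • b)‖) ≤ _
      rw [hval w]
      exact elog_le_coe_iff.mpr h2
  · intro c z
    show elog (‖f (c • z)‖) = _
    rw [map_smul, smul_eq_mul, norm_mul]
    exact elog_mul (norm_nonneg _) (norm_nonneg _)

/-- if a balanced convex compact subset `B` of a Fréchet space contains a
subset which is not projectively pluripolar in `E`, then the linear hull `E_B` of `B` is
dense in `E`. -/
theorem statement16
    {E : Type*} [AddCommGroup E] [Module ℝ E] [Module ℂ E] [IsScalarTower ℝ ℂ E]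
    [UniformSpace E] [IsUniformAddGroup E] [ContinuousSMul ℂ E] [LocallyConvexSpace ℝ E]
    [CompleteSpace E] [TopologicalSpace.MetrizableSpace E]
    (B : Set E) (hBcompact : IsCompact B) (hBbal : Balanced ℂ B) (hBconv : Convex ℝ B)
    (hBbig : ∃ A : Set E, A ⊆ B ∧ ¬ ProjPluripolar E A) :
    Dense (Submodule.span ℂ B : Set E) := by
  by_contra hdense
  obtain ⟨A, hAB, hA⟩ := hBbig
  apply hA
  obtain ⟨x, hx⟩ : ∃ x, x ∉ closure (Submodule.span ℂ B : Set E) := by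
    by_contra h
    push_neg at h
    exact hdense h
  set S := (Submodule.span ℂ B).topologicalClosure with hS
  have hxS : x ∉ (S : Set E) := hx
  have hconv : Convex ℝ (S : Set E) := (S.restrictScalars ℝ).convex
  obtain ⟨f, u, hfu, hux⟩ := RCLike.geometric_hahn_banach_closed_point (𝕜 := ℂ)
    hconv (Submodule.span ℂ B).isClosed_topologicalClosure hxS
  -- f vanishes on S
  have hf0 : ∀ a ∈ S, f a = 0 := by
    intro a ha
    by_contra hfa
    have hpos : 0 < Complex.normSq (f a) := Complex.normSq_pos.mpr hfa
    set t : ℝ := (u + 1) / Complex.normSq (f a) with ht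
    have hmem : ((t : ℂ) * (starRingEnd ℂ) (f a)) • a ∈ S := S.smul_mem _ ha
    have hlt := hfu _ hmem
    rw [map_smul, smul_eq_mul] at hlt
    have hval : ((t : ℂ) * (starRingEnd ℂ) (f a)) * f a = ((t * Complex.normSq (f a) : ℝ) : ℂ) := by
      rw [mul_assoc, mul_comm ((starRingEnd ℂ) (f a)), Complex.mul_conj]
      push_cast
      ring
    rw [hval] at hlt
    simp only [RCLike.re_to_complex, Complex.ofReal_re] at hlt
    rw [ht, div_mul_cancel₀ _ hpos.ne'] at hlt
    linarith
  -- f x ≠ 0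
  have hfx : f x ≠ 0 := by
    intro h
    have h0 : RCLike.re (f (0 : E)) < u := hfu 0 S.zero_mem
    rw [map_zero, map_zero] at h0
    rw [h, map_zero] at hux
    linarith
  refine ⟨fun z => elog (‖f z‖), homogPSH_of_clm f, ⟨x, ?_⟩, ?_⟩
  · have : ¬ ‖f x‖ ≤ 0 := not_le.mpr (norm_pos_iff.mpr hfx)
    show elog (‖f x‖) ≠ ⊥
    unfold elog
    rw [if_neg this]
    exact EReal.coe_ne_bot _
  · intro z hz
    have hzS : z ∈ S := (Submodule.span ℂ B).le_topologicalClosure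
      (Submodule.subset_span (hAB hz))
    show elog (‖f z‖) = ⊥
    rw [hf0 z hzS]
    simp only [map_zero, norm_zero]
    exact if_pos le_rfl
end
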